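/- Let F be an algebraically closed field. Every F-linear subspace L of Sym(3, F) all of whose elements are singular matrices satisfies dim_F L ≤ 3. Equivalently, the maximal linear subspaces contained in the secant variety of the quadric Veronese surface in PG(5, F) are planes. -/

import Mathlib

open Matrix Module

variable {F : Type} [Field F]

/-- cross product -/
def cp (x y : Fin 3 → F) : Fin 3 → F :=
  ![x 1 * y 2 - x 2 * y 1, x 2 * y 0 - x 0 * y 2, x 0 * y 1 - x 1 * y 0]

lemma cp_eq_zero_colinear {b c : Fin 3 → F} (hb : b ≠ 0) (h : cp b c = 0) :
    ∃ t : F, c = t • b := by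
  have h0 : b 1 * c 2 - b 2 * c 1 = 0 := congrFun h 0
  have h1 : b 2 * c 0 - b 0 * c 2 = 0 := congrFun h 1
  have h2 : b 0 * c 1 - b 1 * c 0 = 0 := congrFun h 2
  have key : ∀ j k : Fin 3, b j * c k = b k * c j := by
    intro j k
    fin_cases j <;> fin_cases k <;>
      simp only [Fin.zero_eta, Fin.mk_one, Fin.reduceFinMk, Fin.isValue] <;>
      first
        | ring1
        | linear_combination h0
        | linear_combination -h0
        | linear_combination h1
        | linear_combination -h1
        | linear_combination h2
        | linear_combination -h2
  obtain ⟨i, hi⟩ : ∃ i, b i ≠ 0 := by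
    by_contra hno; push_neg at hno; exact hb (funext fun i => hno i)
  refine ⟨c i / b i, funext fun k => ?_⟩
  have hk := key i k
  show c k = c i / b i * b k
  rw [div_mul_eq_mul_div, eq_div_iff hi]
  linear_combination hk

lemma exists_S_pair {b c : Fin 3 → F} (h : cp b c ≠ 0) :
    ∃ S : Matrix (Fin 3) (Fin 3) F, IsUnit S.det ∧
      S *ᵥ b = ![1,0,0] ∧ S *ᵥ c = ![0,1,0] := by
  obtain ⟨j, hj⟩ : ∃ j, cp b c j ≠ 0 := by
    by_contra hno; push_neg at hno; exact h (funext fun i => hno i)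
  obtain ⟨e, he⟩ : ∃ e : Fin 3 → F, (Matrix.of ![b, c, e]).det = cp b c j := by
    fin_cases j
    · exact ⟨![1,0,0], by simp [Matrix.det_fin_three, cp]; try ring⟩
    · exact ⟨![0,1,0], by simp [Matrix.det_fin_three, cp]; try ring⟩
    · exact ⟨![0,0,1], by simp [Matrix.det_fin_three, cp]; try ring⟩
  set R : Matrix (Fin 3) (Fin 3) F := Matrix.of ![b, c, e] with hR
  set M : Matrix (Fin 3) (Fin 3) F := Rᵀ with hM
  have hdetM : IsUnit M.det := by
    rw [hM, Matrix.det_transpose, he]; exact (isUnit_iff_ne_zero).mpr hj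
  refine ⟨M⁻¹, M.isUnit_nonsing_inv_det hdetM, ?_, ?_⟩
  · have hb : M *ᵥ ![1,0,0] = b := by
      funext i
      fin_cases i <;>
        simp [hM, hR, Matrix.mulVec, dotProduct, Fin.sum_univ_three, Matrix.vecHead, Matrix.vecTail, Matrix.transpose_apply]
    rw [← hb, Matrix.mulVec_mulVec, Matrix.nonsing_inv_mul M hdetM, Matrix.one_mulVec]
  · have hc : M *ᵥ ![0,1,0] = c := by
      funext i
      fin_cases i <;>
        simp [hM, hR, Matrix.mulVec, dotProduct, Fin.sum_univ_three, Matrix.vecHead, Matrix.vecTail, Matrix.transpose_apply]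
    rw [← hc, Matrix.mulVec_mulVec, Matrix.nonsing_inv_mul M hdetM, Matrix.one_mulVec]

lemma exists_S_single {b : Fin 3 → F} (hb : b ≠ 0) :
    ∃ S : Matrix (Fin 3) (Fin 3) F, IsUnit S.det ∧ S *ᵥ b = ![1,0,0] := by
  obtain ⟨c, hc⟩ : ∃ c : Fin 3 → F, cp b c ≠ 0 := by
    by_contra hno
    push_neg at hno
    apply hb
    funext i
    have h0 := congrFun (hno ![1,0,0]) 1
    have h1 := congrFun (hno ![1,0,0]) 2
    have h2 := congrFun (hno ![0,1,0]) 0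
    have h3 := congrFun (hno ![0,1,0]) 2
    simp [cp] at h0 h1 h2 h3
    fin_cases i <;> simp_all
  obtain ⟨S, h1, h2, _⟩ := exists_S_pair hc
  exact ⟨S, h1, h2⟩

lemma dot_symm {A : Matrix (Fin 3) (Fin 3) F} (hA : A.IsSymm) (x y : Fin 3 → F) :
    x ⬝ᵥ (A *ᵥ y) = (A *ᵥ x) ⬝ᵥ y := by
  have e : ∀ i j : Fin 3, A j i = A i j := fun i j => congrFun (congrFun hA i) j
  simp only [Matrix.mulVec, dotProduct, Fin.sum_univ_three]
  linear_combination (x 0 * y 1 - x 1 * y 0) * e 1 0 + (x 0 * y 2 - x 2 * y 0) * e 2 0 +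
    (x 1 * y 2 - x 2 * y 1) * e 2 1

lemma vmv_mulVec (v w u : Fin 3 → F) :
    (Matrix.vecMulVec v w) *ᵥ u = (w ⬝ᵥ u) • v := by
  funext i
  simp [Matrix.vecMulVec, Matrix.mulVec, dotProduct, Fin.sum_univ_three]
  ring

lemma vmv_transpose (v w : Fin 3 → F) :
    (Matrix.vecMulVec v w)ᵀ = Matrix.vecMulVec w v := by
  ext i j
  simp [Matrix.vecMulVec, Matrix.transpose_apply]
  ring

lemma mul_vmv_mul (S : Matrix (Fin 3) (Fin 3) F) (v w : Fin 3 → F) :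
    S * Matrix.vecMulVec v w * Sᵀ = Matrix.vecMulVec (S *ᵥ v) (S *ᵥ w) := by
  ext i j
  simp [Matrix.mul_apply, Matrix.vecMulVec, Matrix.mulVec, dotProduct,
    Fin.sum_univ_three, Matrix.transpose_apply]
  ring

lemma poly2_zero [Infinite F] {a b c : F} (h : ∀ t : F, a + b*t + c*t^2 = 0) :
    a = 0 ∧ b = 0 ∧ c = 0 := by
  have ha : a = 0 := by have h0 := h 0; simpa using h0
  classical
  obtain ⟨x, hx⟩ := Infinite.exists_notMem_finset ({0, 1} : Finset F)
  simp only [Finset.mem_insert, Finset.mem_singleton, not_or] at hx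
  obtain ⟨hx0, hx1⟩ := hx
  have h1 := h 1
  have hxx := h x
  have hc : c * (x * (x - 1)) = 0 := by linear_combination hxx - x * h1 + (x - 1) * ha
  have hc0 : c = 0 := by
    rcases mul_eq_zero.mp hc with h' | h'
    · exact h'
    · rcases mul_eq_zero.mp h' with h'' | h''
      · exact absurd h'' hx0
      · exact absurd (by linear_combination h'' : x = 1) hx1
  have hb : b = 0 := by linear_combination h1 - ha - hc0
  exact ⟨ha, hb, hc0⟩

lemma congr_submodule (L : Submodule F (Matrix (Fin 3) (Fin 3) F))
    (S : Matrix (Fin 3) (Fin 3) F) (hS : IsUnit S.det) :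
    ∃ L' : Submodule F (Matrix (Fin 3) (Fin 3) F),
      finrank F L' = finrank F L ∧ (∀ A ∈ L, S * A * Sᵀ ∈ L') ∧
      (∀ B ∈ L', ∃ A ∈ L, B = S * A * Sᵀ) := by
  have hST : IsUnit (Sᵀ).det := by rwa [Matrix.det_transpose]
  let f : Matrix (Fin 3) (Fin 3) F →ₗ[F] Matrix (Fin 3) (Fin 3) F :=
    (LinearMap.mulLeft F S).comp (LinearMap.mulRight F Sᵀ)
  have hf : ∀ A, f A = S * A * Sᵀ := by
    intro A
    simp [f, LinearMap.mulLeft_apply, LinearMap.mulRight_apply, Matrix.mul_assoc]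
  have hinj : Function.Injective f := by
    intro A B hAB
    rw [hf, hf] at hAB
    have := congrArg (fun X => S⁻¹ * X * Sᵀ⁻¹) hAB
    simpa [Matrix.mul_assoc, Matrix.nonsing_inv_mul_cancel_left _ _ hS,
      Matrix.mul_nonsing_inv _ hST, Matrix.mul_one,
      Matrix.mul_nonsing_inv_cancel_right _ _ hST] using this
  refine ⟨L.map f, (Submodule.equivMapOfInjective f hinj L).finrank_eq.symm, ?_, ?_⟩
  · intro A hA
    exact ⟨A, hA, hf A⟩
  · rintro B ⟨A, hA, rfl⟩
    exact ⟨A, hA, hf A⟩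

lemma scale_one [IsAlgClosed F] {A : Matrix (Fin 3) (Fin 3) F} {x : Fin 3 → F}
    (hx : x ⬝ᵥ (A *ᵥ x) ≠ 0) : ∃ u : Fin 3 → F, u ⬝ᵥ (A *ᵥ u) = 1 := by
  obtain ⟨d, hd⟩ := IsAlgClosed.exists_pow_nat_eq (x ⬝ᵥ (A *ᵥ x)) (n := 2) (by norm_num)
  have hd0 : d ≠ 0 := by
    intro h0; apply hx; rw [← hd, h0]; ring
  refine ⟨d⁻¹ • x, ?_⟩
  have expand : (d⁻¹ • x) ⬝ᵥ (A *ᵥ (d⁻¹ • x)) = d⁻¹ * d⁻¹ * (x ⬝ᵥ (A *ᵥ x)) := by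
    simp [Matrix.mulVec, dotProduct, Fin.sum_univ_three, smul_eq_mul]
    ring
  rw [expand, ← hd]
  field_simp
  try ring

lemma alt_decomp {A : Matrix (Fin 3) (Fin 3) F} (hA : A.IsSymm)
    (hq : ∀ z : Fin 3 → F, z ⬝ᵥ (A *ᵥ z) = 0) (hA0 : A ≠ 0) :
    ∃ v w : Fin 3 → F, A = Matrix.vecMulVec v w + Matrix.vecMulVec w v ∧
      ∀ α β : F, α • v + β • w = 0 → α = 0 ∧ β = 0 := by
  have e : ∀ i j : Fin 3, A j i = A i j := fun i j => congrFun (congrFun hA i) j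
  have d0 : A 0 0 = 0 := by have := hq ![1,0,0]; simpa [Matrix.mulVec, dotProduct, Fin.sum_univ_three] using this
  have d1 : A 1 1 = 0 := by have := hq ![0,1,0]; simpa [Matrix.mulVec, dotProduct, Fin.sum_univ_three] using this
  have d2 : A 2 2 = 0 := by have := hq ![0,0,1]; simpa [Matrix.mulVec, dotProduct, Fin.sum_univ_three] using this
  have t01 : A 0 1 + A 0 1 = 0 := by
    have := hq ![1,1,0]
    simp [Matrix.mulVec, dotProduct, Fin.sum_univ_three] at this
    linear_combination this - d0 - d1 - e 0 1
  have t02 : A 0 2 + A 0 2 = 0 := by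
    have := hq ![1,0,1]
    simp [Matrix.mulVec, dotProduct, Fin.sum_univ_three] at this
    linear_combination this - d0 - d2 - e 0 2
  have t12 : A 1 2 + A 1 2 = 0 := by
    have := hq ![0,1,1]
    simp [Matrix.mulVec, dotProduct, Fin.sum_univ_three] at this
    linear_combination this - d1 - d2 - e 1 2
  set a := A 0 1 with ha
  set b := A 0 2 with hb
  set c := A 1 2 with hc
  have hmat : ∀ v w : Fin 3 → F,
      (∀ i j : Fin 3, A i j = v i * w j + w i * v j) →
      A = Matrix.vecMulVec v w + Matrix.vecMulVec w v := by
    intro v w hvw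
    ext i j
    rw [Matrix.add_apply, Matrix.vecMulVec_apply, Matrix.vecMulVec_apply]
    exact hvw i j
  have hentry : ∀ i j : Fin 3, (i = 0 ∧ j = 0) ∨ (i = 0 ∧ j = 1) ∨ (i = 0 ∧ j = 2)
      ∨ (i = 1 ∧ j = 0) ∨ (i = 1 ∧ j = 1) ∨ (i = 1 ∧ j = 2)
      ∨ (i = 2 ∧ j = 0) ∨ (i = 2 ∧ j = 1) ∨ (i = 2 ∧ j = 2) := by decide
  by_cases hA01 : a ≠ 0
  · refine ⟨![a, 0, c], ![0, 1, b/a], hmat _ _ ?_, ?_⟩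
    · intro i j
      rcases hentry i j with ⟨h1,h2⟩|⟨h1,h2⟩|⟨h1,h2⟩|⟨h1,h2⟩|⟨h1,h2⟩|⟨h1,h2⟩|⟨h1,h2⟩|⟨h1,h2⟩|⟨h1,h2⟩ <;>
        subst h1 <;> subst h2 <;> simp
      · exact d0
      · rfl
      · rw [mul_div_cancel₀ _ hA01]
      · linear_combination e 0 1 - ha
      · exact d1
      · rfl
      · rw [div_mul_cancel₀ _ hA01]; linear_combination e 0 2 - hb
      · linear_combination e 1 2 - hc
      · linear_combination d2 - (b / a) * t12
    · intro α β hh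
      have h0 := congrFun hh 0
      have h1 := congrFun hh 1
      simp at h0 h1
      constructor
      · rcases h0 with h | h
        · exact h
        · exact absurd h hA01
      · exact h1
  · push_neg at hA01
    by_cases hA02 : b ≠ 0
    · refine ⟨![b, c, 0], ![0, 0, 1], hmat _ _ ?_, ?_⟩
      · intro i j
        rcases hentry i j with ⟨h1,h2⟩|⟨h1,h2⟩|⟨h1,h2⟩|⟨h1,h2⟩|⟨h1,h2⟩|⟨h1,h2⟩|⟨h1,h2⟩|⟨h1,h2⟩|⟨h1,h2⟩ <;>
          subst h1 <;> subst h2 <;> simp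
        · exact d0
        · exact hA01
        · rfl
        · linear_combination e 0 1 + hA01 - ha
        · exact d1
        · rfl
        · linear_combination e 0 2 - hb
        · linear_combination e 1 2 - hc
        · exact d2
      · intro α β hh
        have h0 := congrFun hh 0
        have h2 := congrFun hh 2
        simp at h0 h2
        constructor
        · rcases h0 with h | h
          · exact h
          · exact absurd h hA02
        · exact h2
    · push_neg at hA02
      have hA12 : c ≠ 0 := by
        intro hc0
        apply hA0
        ext i j
        rcases hentry i j with ⟨h1,h2⟩|⟨h1,h2⟩|⟨h1,h2⟩|⟨h1,h2⟩|⟨h1,h2⟩|⟨h1,h2⟩|⟨h1,h2⟩|⟨h1,h2⟩|⟨h1,h2⟩ <;>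
          subst h1 <;> subst h2 <;> simp
        · exact d0
        · exact hA01
        · exact hA02
        · linear_combination e 0 1 + hA01
        · exact d1
        · exact hc0
        · linear_combination e 0 2 + hA02
        · linear_combination e 1 2 + hc0
        · exact d2
      refine ⟨![0, c, 0], ![0, 0, 1], hmat _ _ ?_, ?_⟩
      · intro i j
        rcases hentry i j with ⟨h1,h2⟩|⟨h1,h2⟩|⟨h1,h2⟩|⟨h1,h2⟩|⟨h1,h2⟩|⟨h1,h2⟩|⟨h1,h2⟩|⟨h1,h2⟩|⟨h1,h2⟩ <;>
          subst h1 <;> subst h2 <;> simp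
        · exact d0
        · exact hA01
        · exact hA02
        · linear_combination e 0 1 + hA01 - ha
        · exact d1
        · rfl
        · linear_combination e 0 2 + hA02 - hb
        · linear_combination e 1 2 - hc
        · exact d2
      · intro α β hh
        have h1 := congrFun hh 1
        have h2 := congrFun hh 2
        simp at h1 h2
        constructor
        · rcases h1 with h | h
          · exact h
          · exact absurd h hA12
        · exact h2

lemma sym2_rank {V : Submodule F (Fin 3 → F)}
    (hV : ∀ x ∈ V, x 0 * x 2 = (x 1)^2) : finrank F V ≤ 1 := by
  rcases eq_or_ne V ⊥ with hbot | hne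
  · subst hbot; simp
  obtain ⟨u, huV, hu0⟩ := Submodule.exists_mem_ne_zero_of_ne_bot hne
  have hle : V ≤ Submodule.span F {u} := by
    intro v hv
    have hu := hV u huV
    have hvv := hV v hv
    have hm := hV (u + v) (V.add_mem huV hv)
    simp only [Pi.add_apply] at hm
    have hmix : u 0 * v 2 + v 0 * u 2 = 2 * (u 1 * v 1) := by linear_combination hm - hu - hvv
    have c0 : (u 1 * v 2 - u 2 * v 1)^2 = 0 := by
      linear_combination (u 2 * v 2) * hmix - (v 2)^2 * hu - (u 2)^2 * hvv
    have c1 : (u 2 * v 0 - u 0 * v 2)^2 = 0 := by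
      linear_combination (u 2 * v 0 + u 0 * v 2 + 2 * (u 1 * v 1)) * hmix
        - 4 * (v 1)^2 * hu - 4 * (u 0 * u 2) * hvv
    have c2 : (u 0 * v 1 - u 1 * v 0)^2 = 0 := by
      linear_combination (u 0 * v 0) * hmix - (v 0)^2 * hu - (u 0)^2 * hvv
    have hcp : cp u v = 0 := by
      funext i
      fin_cases i
      · exact pow_eq_zero_iff (n := 2) (by norm_num) |>.mp c0
      · exact pow_eq_zero_iff (n := 2) (by norm_num) |>.mp c1
      · exact pow_eq_zero_iff (n := 2) (by norm_num) |>.mp c2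
    obtain ⟨t, rfl⟩ := cp_eq_zero_colinear hu0 hcp
    exact Submodule.smul_mem _ t (Submodule.mem_span_singleton_self u)
  calc finrank F V ≤ finrank F (Submodule.span F {u}) := Submodule.finrank_mono hle
    _ = 1 := finrank_span_singleton hu0

set_option synthInstance.maxHeartbeats 1000000 in
set_option maxHeartbeats 1000000 in
lemma caseE11 (L' : Submodule F (Matrix (Fin 3) (Fin 3) F))
    (hsymm : ∀ B ∈ L', B.IsSymm) (hsing : ∀ B ∈ L', B.det = 0)
    (hN : (!![1,0,0;0,0,0;0,0,0] : Matrix (Fin 3) (Fin 3) F) ∈ L')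
    (hrank : 4 ≤ finrank F L') : False := by
  set N : Matrix (Fin 3) (Fin 3) F := !![1,0,0;0,0,0;0,0,0] with hNdef
  -- step 1: lower 2x2 minor vanishes
  have minor : ∀ B ∈ L', B 1 1 * B 2 2 = (B 1 2)^2 := by
    intro B hB
    have e : ∀ i j : Fin 3, B j i = B i j := fun i j => congrFun (congrFun (hsymm B hB) i) j
    have h0 := hsing B hB
    have h1 := hsing (B + N) (L'.add_mem hB hN)
    rw [Matrix.det_fin_three] at h0 h1
    simp only [Matrix.add_apply, hNdef] at h1
    norm_num [Matrix.vecHead, Matrix.vecTail, Matrix.cons_val_two, Matrix.tail_cons, Matrix.head_cons] at h1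
    first
      | linear_combination h1 - h0 + B 1 2 * e 1 2
      | linear_combination h1 - h0 - B 1 2 * e 1 2
  -- linear map to the lower block
  let f : L' →ₗ[F] (Fin 3 → F) :=
    { toFun := fun B => ![B.1 1 1, B.1 1 2, B.1 2 2]
      map_add' := by
        intro B C
        funext i
        fin_cases i <;> simp
      map_smul' := by
        intro t B
        funext i
        fin_cases i <;> simp }
  have hfapp : ∀ B : L', f B = ![B.1 1 1, B.1 1 2, B.1 2 2] := fun _ => rfl
  have hrange : ∀ x ∈ LinearMap.range f, x 0 * x 2 = (x 1)^2 := by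
    rintro x ⟨B, rfl⟩
    have := minor B.1 B.2
    simpa [hfapp] using this
  have hrk1 : finrank F (LinearMap.range f) ≤ 1 := sym2_rank hrange
  -- kernel
  let g : (LinearMap.ker f) →ₗ[F] (Fin 3 → F) :=
    { toFun := fun B => ![B.1.1 0 0, B.1.1 0 1, B.1.1 0 2]
      map_add' := by
        intro B C
        funext i
        fin_cases i <;> simp
      map_smul' := by
        intro t B
        funext i
        fin_cases i <;> simp }
  have hker_entries : ∀ B : LinearMap.ker f, B.1.1 1 1 = 0 ∧ B.1.1 1 2 = 0 ∧ B.1.1 2 2 = 0 := by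
    rintro ⟨B, hB⟩
    have : f B = 0 := hB
    rw [hfapp] at this
    refine ⟨congrFun this 0, congrFun this 1, congrFun this 2⟩
  have hginj : Function.Injective g := by
    intro B C hBC
    have h0 := congrFun hBC 0
    have h1 := congrFun hBC 1
    have h2 := congrFun hBC 2
    simp only [g, LinearMap.coe_mk, AddHom.coe_mk, Matrix.cons_val_zero, Matrix.cons_val_one,
      Matrix.head_cons, Matrix.cons_val_two, Matrix.tail_cons] at h0 h1 h2
    obtain ⟨hb1, hb2, hb3⟩ := hker_entries B
    obtain ⟨hc1, hc2, hc3⟩ := hker_entries C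
    have eB : ∀ i j : Fin 3, B.1.1 j i = B.1.1 i j :=
      fun i j => congrFun (congrFun (hsymm B.1.1 B.1.2) i) j
    have eC : ∀ i j : Fin 3, C.1.1 j i = C.1.1 i j :=
      fun i j => congrFun (congrFun (hsymm C.1.1 C.1.2) i) j
    ext i j
    fin_cases i <;> fin_cases j <;>
      simp only [Fin.zero_eta, Fin.mk_one, Fin.reduceFinMk, Fin.isValue] <;>
      first
        | assumption
        | (rw [eB 0 1, eC 0 1]; assumption)
        | (rw [eB 0 2, eC 0 2]; assumption)
        | (rw [eB 1 2, eC 1 2]; rw [hb2, hc2])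
        | (rw [hb1, hc1])
        | (rw [hb2, hc2])
        | (rw [hb3, hc3])
  have hker3 : finrank F (LinearMap.ker f) ≤ 3 := by
    have := LinearMap.finrank_le_finrank_of_injective hginj
    simpa [Module.finrank_fin_fun] using this
  have hrn := LinearMap.finrank_range_add_finrank_ker f
  have hrk_eq : finrank F (LinearMap.range f) = 1 ∧ finrank F (LinearMap.ker f) = 3 := by
    constructor <;> omega
  obtain ⟨hrk1', hker3'⟩ := hrk_eq
  have hrange_ne : ∃ B0 : L', f B0 ≠ 0 := by
    by_contra hno
    push_neg at hno
    have hf0 : f = 0 := by ext B; rw [hno B]; rfl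
    rw [LinearMap.range_eq_bot.mpr hf0] at hrk1'
    simp at hrk1'
  obtain ⟨B0, hB0ne⟩ := hrange_ne
  have hgsurj : ∀ y : Fin 3 → F, ∃ Z : LinearMap.ker f, g Z = y := by
    have h1 : finrank F (LinearMap.range g) = 3 := by
      rw [LinearMap.finrank_range_of_inj hginj]; exact hker3'
    have h2 : LinearMap.range g = ⊤ :=
      Submodule.eq_top_of_finrank_eq (by simp [h1, Module.finrank_fin_fun])
    intro y
    have : y ∈ LinearMap.range g := h2 ▸ Submodule.mem_top
    exact this
  have hK : ∀ p q r : F, (!![p,q,r;q,0,0;r,0,0] : Matrix (Fin 3) (Fin 3) F) ∈ L' := by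
    intro p q r
    obtain ⟨Z, hZ⟩ := hgsurj ![p,q,r]
    have hz0 : Z.1.1 0 0 = p := by
      have := congrFun hZ 0; simpa [g] using this
    have hz1 : Z.1.1 0 1 = q := by
      have := congrFun hZ 1; simpa [g] using this
    have hz2 : Z.1.1 0 2 = r := by
      have := congrFun hZ 2; simpa [g] using this
    obtain ⟨hk1, hk2, hk3⟩ := hker_entries Z
    have eZ : ∀ i j : Fin 3, Z.1.1 j i = Z.1.1 i j :=
      fun i j => congrFun (congrFun (hsymm Z.1.1 Z.1.2) i) j
    have hmat : Z.1.1 = !![p,q,r;q,0,0;r,0,0] := by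
      ext i j
      fin_cases i <;> fin_cases j <;>
        simp only [Fin.zero_eta, Fin.mk_one, Fin.reduceFinMk, Fin.isValue,
          Matrix.cons_val', Matrix.cons_val_zero, Matrix.cons_val_one, Matrix.head_cons,
          Matrix.empty_val', Matrix.cons_val_fin_one, Matrix.cons_val_two, Matrix.tail_cons,
          Matrix.head_fin_const, Matrix.of_apply] <;>
        first
          | assumption
          | (rw [eZ 0 1]; assumption)
          | (rw [eZ 0 2]; assumption)
          | (rw [eZ 1 2]; assumption)
    rw [← hmat]
    exact Z.1.2
  -- final contradiction
  set s := B0.1 0 0 with hs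
  set t := B0.1 0 1 with ht
  set u := B0.1 0 2 with hu
  set α := B0.1 1 1 with hα'
  set β := B0.1 1 2 with hβ'
  set γ := B0.1 2 2 with hγ'
  have eB0 : ∀ i j : Fin 3, B0.1 j i = B0.1 i j :=
    fun i j => congrFun (congrFun (hsymm B0.1 B0.2) i) j
  have hαγ : α * γ = β^2 := minor B0.1 B0.2
  have hγ0 : γ = 0 := by
    have hd := hsing (B0.1 + !![0, 1-t, -u; 1-t, 0, 0; -u, 0, 0])
      (L'.add_mem B0.2 (hK 0 (1-t) (-u)))
    rw [Matrix.det_fin_three] at hd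
    simp only [Matrix.add_apply] at hd
    norm_num [Matrix.vecHead, Matrix.vecTail, Matrix.cons_val_two, Matrix.tail_cons, Matrix.head_cons] at hd
    rw [eB0 0 1, eB0 0 2, eB0 1 2] at hd
    linear_combination s * hαγ - hd
  have hα0 : α = 0 := by
    have hd := hsing (B0.1 + !![0, -t, 1-u; -t, 0, 0; 1-u, 0, 0])
      (L'.add_mem B0.2 (hK 0 (-t) (1-u)))
    rw [Matrix.det_fin_three] at hd
    simp only [Matrix.add_apply] at hd
    norm_num [Matrix.vecHead, Matrix.vecTail, Matrix.cons_val_two, Matrix.tail_cons, Matrix.head_cons] at hd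
    rw [eB0 0 1, eB0 0 2, eB0 1 2] at hd
    linear_combination s * hαγ - hd
  have hβ0 : β = 0 := by
    have : β^2 = 0 := by rw [← hαγ, hα0, zero_mul]
    exact pow_eq_zero_iff (n := 2) (by norm_num) |>.mp this
  apply hB0ne
  rw [hfapp]
  funext i
  fin_cases i
  · exact hα0
  · exact hβ0
  · exact hγ0

set_option synthInstance.maxHeartbeats 1000000 in
set_option maxHeartbeats 1000000 in
lemma caseDiag [IsAlgClosed F] (L' : Submodule F (Matrix (Fin 3) (Fin 3) F))
    (hsymm : ∀ B ∈ L', B.IsSymm) (hsing : ∀ B ∈ L', B.det = 0)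
    (hN : (!![1,0,0;0,1,0;0,0,0] : Matrix (Fin 3) (Fin 3) F) ∈ L')
    (hrank : 4 ≤ finrank F L') : False := by
  set N : Matrix (Fin 3) (Fin 3) F := !![1,0,0;0,1,0;0,0,0] with hNdef
  have key : ∀ B ∈ L', B 2 2 = 0 ∧ (B 0 2)^2 + (B 1 2)^2 = 0 := by
    intro B hB
    have e : ∀ i j : Fin 3, B j i = B i j := fun i j => congrFun (congrFun (hsymm B hB) i) j
    have hpoly : ∀ t : F, (B.det) +
        (B 0 0 * B 2 2 - B 0 2 * B 2 0 + B 1 1 * B 2 2 - B 1 2 * B 2 1) * t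
        + (B 2 2) * t^2 = 0 := by
      intro t
      have hd := hsing (B + t • N) (L'.add_mem hB (L'.smul_mem t hN))
      rw [Matrix.det_fin_three] at hd
      simp only [Matrix.add_apply, Matrix.smul_apply, hNdef, smul_eq_mul] at hd
      norm_num [Matrix.vecHead, Matrix.vecTail, Matrix.cons_val_two, Matrix.tail_cons, Matrix.head_cons] at hd
      rw [Matrix.det_fin_three]
      linear_combination hd
    obtain ⟨hc0, hc1, hc2⟩ := poly2_zero hpoly
    refine ⟨hc2, ?_⟩
    linear_combination -hc1 + (B 0 0 + B 1 1) * hc2 - B 0 2 * e 0 2 - B 1 2 * e 1 2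
  obtain ⟨e, he⟩ := IsAlgClosed.exists_pow_nat_eq (-1 : F) (n := 2) (by norm_num)
  have dichot : ∀ B ∈ L', B 0 2 + e * B 1 2 = 0 ∨ B 0 2 - e * B 1 2 = 0 := by
    intro B hB
    obtain ⟨-, h2⟩ := key B hB
    have : (B 0 2 + e * B 1 2) * (B 0 2 - e * B 1 2) = 0 := by
      linear_combination h2 - (B 1 2)^2 * he
    exact mul_eq_zero.mp this
  have main : ∃ c : F, c^2 = -1 ∧ ∀ B ∈ L', B 0 2 = c * B 1 2 := by
    by_cases hcase : ∀ B ∈ L', B 0 2 + e * B 1 2 = 0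
    · refine ⟨-e, by rw [neg_pow]; simp [he], ?_⟩
      intro B hB
      have := hcase B hB
      linear_combination this
    · push_neg at hcase
      obtain ⟨B1, hB1, hB1ne⟩ := hcase
      have hB1' : B1 0 2 - e * B1 1 2 = 0 := (dichot B1 hB1).resolve_left hB1ne
      refine ⟨e, he, ?_⟩
      intro B hB
      rcases dichot B hB with h | h
      · -- consider B + B1
        rcases dichot (B + B1) (L'.add_mem hB hB1) with h' | h'
        · exfalso
          apply hB1ne
          simp only [Matrix.add_apply] at h'
          linear_combination h' - h
        · simp only [Matrix.add_apply] at h'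
          linear_combination h' - hB1'
      · linear_combination h
  obtain ⟨c, hc2, hc⟩ := main
  -- embed into F^4
  let m : L' →ₗ[F] (Fin 4 → F) :=
    { toFun := fun B => ![B.1 0 0, B.1 0 1, B.1 1 1, B.1 1 2]
      map_add' := by
        intro B C
        funext i
        fin_cases i <;> simp
      map_smul' := by
        intro t B
        funext i
        fin_cases i <;> simp }
  have hminj : Function.Injective m := by
    intro B C hBC
    have h0 := congrFun hBC 0
    have h1 := congrFun hBC 1
    have h2 := congrFun hBC 2
    have h3 := congrFun hBC 3
    simp only [m, LinearMap.coe_mk, AddHom.coe_mk, Matrix.cons_val_zero, Matrix.cons_val_one,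
      Matrix.head_cons, Matrix.cons_val_two, Matrix.tail_cons, Matrix.cons_val_three] at h0 h1 h2 h3
    have hBc := hc B.1 B.2
    have hCc := hc C.1 C.2
    have hB22 := (key B.1 B.2).1
    have hC22 := (key C.1 C.2).1
    have eB : ∀ i j : Fin 3, B.1 j i = B.1 i j :=
      fun i j => congrFun (congrFun (hsymm B.1 B.2) i) j
    have eC : ∀ i j : Fin 3, C.1 j i = C.1 i j :=
      fun i j => congrFun (congrFun (hsymm C.1 C.2) i) j
    ext i j
    fin_cases i <;> fin_cases j <;>
      simp only [Fin.zero_eta, Fin.mk_one, Fin.reduceFinMk, Fin.isValue] <;>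
      first
        | assumption
        | (rw [hBc, hCc, h3])
        | (rw [eB 0 1, eC 0 1]; assumption)
        | (rw [eB 0 2, eC 0 2, hBc, hCc, h3])
        | (rw [eB 1 2, eC 1 2]; assumption)
        | (rw [hB22, hC22])
  have hrk4 : finrank F L' = 4 := by
    have hle : finrank F L' ≤ 4 := by
      have := LinearMap.finrank_le_finrank_of_injective hminj
      simpa [Module.finrank_fin_fun] using this
    omega
  have hmsurj : ∀ y : Fin 4 → F, ∃ D : L', m D = y := by
    have h1 : finrank F (LinearMap.range m) = 4 := by
      rw [LinearMap.finrank_range_of_inj hminj]; exact hrk4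
    have h2 : LinearMap.range m = ⊤ :=
      Submodule.eq_top_of_finrank_eq (by simp [h1, Module.finrank_fin_fun])
    intro y
    have : y ∈ LinearMap.range m := h2 ▸ Submodule.mem_top
    exact this
  obtain ⟨D, hD⟩ := hmsurj ![1, 0, 0, 1]
  have hd0 : D.1 0 0 = 1 := by have := congrFun hD 0; simpa [m] using this
  have hd1 : D.1 0 1 = 0 := by have := congrFun hD 1; simpa [m] using this
  have hd2 : D.1 1 1 = 0 := by have := congrFun hD 2; simpa [m] using this
  have hd3 : D.1 1 2 = 1 := by have := congrFun hD 3; simpa [m] using this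
  have hd4 : D.1 0 2 = c := by rw [hc D.1 D.2, hd3, mul_one]
  have hd5 : D.1 2 2 = 0 := (key D.1 D.2).1
  have eD : ∀ i j : Fin 3, D.1 j i = D.1 i j :=
    fun i j => congrFun (congrFun (hsymm D.1 D.2) i) j
  have hdet := hsing D.1 D.2
  rw [Matrix.det_fin_three] at hdet
  rw [eD 0 1, eD 0 2, eD 1 2] at hdet
  rw [hd0, hd1, hd2, hd3, hd4, hd5] at hdet
  norm_num at hdet

lemma triple_prod (u u₂ x : Fin 3 → F) (h1 : u ⬝ᵥ x = 0) (h2 : u₂ ⬝ᵥ x = 0) :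
    cp (cp u u₂) x = 0 := by
  simp only [dotProduct, Fin.sum_univ_three] at h1 h2
  funext i
  fin_cases i <;>
    simp only [cp, Fin.zero_eta, Fin.mk_one, Fin.reduceFinMk, Fin.isValue,
      Matrix.cons_val_zero, Matrix.cons_val_one, Matrix.head_cons, Matrix.cons_val_two,
      Matrix.tail_cons, Pi.zero_apply]
  · linear_combination u₂ 0 * h1 - u 0 * h2
  · linear_combination u₂ 1 * h1 - u 1 * h2
  · linear_combination u₂ 2 * h1 - u 2 * h2

lemma bm_mul_bmT (b c d : Fin 3 → F) :
    (Matrix.of ![b, c, d])ᵀ * (Matrix.of ![b, c, d]) =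
      Matrix.vecMulVec b b + Matrix.vecMulVec c c + Matrix.vecMulVec d d := by
  ext i j
  simp [Matrix.mul_apply, Matrix.vecMulVec_apply, Fin.sum_univ_three,
    Matrix.vecHead, Matrix.vecTail]
  try ring

lemma det_bvw (b v w : Fin 3 → F) :
    (Matrix.vecMulVec b b + Matrix.vecMulVec v w + Matrix.vecMulVec w v).det
      = - ((Matrix.of ![b, v, w]).det)^2 := by
  have hfact : Matrix.vecMulVec b b + Matrix.vecMulVec v w + Matrix.vecMulVec w v
      = (Matrix.of ![b, v, w])ᵀ * (Matrix.of ![b, w, v]) := by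
    ext i j
    simp [Matrix.mul_apply, Matrix.vecMulVec_apply, Fin.sum_univ_three,
      Matrix.vecHead, Matrix.vecTail]
    try ring
  rw [hfact, Matrix.det_mul, Matrix.det_transpose]
  have hswap : (Matrix.of ![b, w, v]).det = -(Matrix.of ![b, v, w]).det := by
    rw [Matrix.det_fin_three, Matrix.det_fin_three]
    simp
    ring
  rw [hswap]
  ring

lemma transported (L : Submodule F (Matrix (Fin 3) (Fin 3) F))
    (hsymm : ∀ A ∈ L, A.IsSymm) (hsing : ∀ A ∈ L, A.det = 0)
    (S : Matrix (Fin 3) (Fin 3) F) (hS : IsUnit S.det) :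
    ∃ L' : Submodule F (Matrix (Fin 3) (Fin 3) F),
      finrank F L' = finrank F L ∧ (∀ B ∈ L', B.IsSymm) ∧ (∀ B ∈ L', B.det = 0) ∧
      (∀ A ∈ L, S * A * Sᵀ ∈ L') := by
  obtain ⟨L', hfr, hmem, hsurj⟩ := congr_submodule L S hS
  refine ⟨L', hfr, ?_, ?_, hmem⟩
  · intro B hB
    obtain ⟨A, hA, rfl⟩ := hsurj B hB
    show (S * A * Sᵀ)ᵀ = S * A * Sᵀ
    calc (S * A * Sᵀ)ᵀ = Sᵀᵀ * (S * A)ᵀ := Matrix.transpose_mul _ _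
      _ = S * (Aᵀ * Sᵀ) := by rw [Matrix.transpose_transpose, Matrix.transpose_mul]
      _ = S * A * Sᵀ := by rw [(hsymm A hA).eq, Matrix.mul_assoc]
  · intro B hB
    obtain ⟨A, hA, rfl⟩ := hsurj B hB
    rw [Matrix.det_mul, Matrix.det_mul, hsing A hA, mul_zero, zero_mul]

lemma vmv_e1 : Matrix.vecMulVec (![1,0,0] : Fin 3 → F) ![1,0,0]
    = !![1,0,0;0,0,0;0,0,0] := by
  ext i j
  fin_cases i <;> fin_cases j <;> simp [Matrix.vecMulVec_apply, Matrix.vecHead, Matrix.vecTail]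

lemma vmv_e12 : Matrix.vecMulVec (![1,0,0] : Fin 3 → F) ![1,0,0]
    + Matrix.vecMulVec (![0,1,0] : Fin 3 → F) ![0,1,0] = !![1,0,0;0,1,0;0,0,0] := by
  ext i j
  fin_cases i <;> fin_cases j <;> simp [Matrix.vecMulVec_apply, Matrix.vecHead, Matrix.vecTail]

set_option maxHeartbeats 2000000 in
set_option synthInstance.maxHeartbeats 1000000 in
/-- Over an algebraically closed field `F`, every linear subspace of
the symmetric `3×3` matrices consisting entirely of singular matrices has dimension
at most `3`: the maximal linear subspaces contained in the secant variety of the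
quadric Veronese surface in `PG(5,F)` are planes. -/
theorem singular_symmetric_subspace_dim_le_three
    (F : Type) [Field F] [IsAlgClosed F]
    (L : Submodule F (Matrix (Fin 3) (Fin 3) F))
    (hsymm : ∀ A ∈ L, A.IsSymm)
    (hsing : ∀ A ∈ L, A.det = 0) :
    Module.finrank F L ≤ 3 := by
  by_contra hc
  push_neg at hc
  have hrank : 4 ≤ finrank F L := hc
  by_cases halt : ∀ A ∈ L, ∀ z : Fin 3 → F, z ⬝ᵥ (A *ᵥ z) = 0
  · -- every element is alternating: embed into F³
    let p : L →ₗ[F] (Fin 3 → F) :=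
      { toFun := fun B => ![B.1 0 1, B.1 0 2, B.1 1 2]
        map_add' := by intro B C; funext i; fin_cases i <;> simp
        map_smul' := by intro t B; funext i; fin_cases i <;> simp }
    have hpinj : Function.Injective p := by
      intro B C hBC
      have h0 := congrFun hBC 0
      have h1 := congrFun hBC 1
      have h2 := congrFun hBC 2
      simp only [p, LinearMap.coe_mk, AddHom.coe_mk, Matrix.cons_val_zero, Matrix.cons_val_one,
        Matrix.head_cons, Matrix.cons_val_two, Matrix.tail_cons] at h0 h1 h2
      have hdiag : ∀ (D : Matrix (Fin 3) (Fin 3) F), D ∈ L →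
          D 0 0 = 0 ∧ D 1 1 = 0 ∧ D 2 2 = 0 := by
        intro D hD
        refine ⟨?_, ?_, ?_⟩
        · have := halt D hD ![1,0,0]
          simpa [Matrix.mulVec, dotProduct, Fin.sum_univ_three] using this
        · have := halt D hD ![0,1,0]
          simpa [Matrix.mulVec, dotProduct, Fin.sum_univ_three] using this
        · have := halt D hD ![0,0,1]
          simpa [Matrix.mulVec, dotProduct, Fin.sum_univ_three] using this
      obtain ⟨hb0, hb1, hb2⟩ := hdiag B.1 B.2
      obtain ⟨hc0, hc1, hc2⟩ := hdiag C.1 C.2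
      have eB : ∀ i j : Fin 3, B.1 j i = B.1 i j :=
        fun i j => congrFun (congrFun (hsymm B.1 B.2) i) j
      have eC : ∀ i j : Fin 3, C.1 j i = C.1 i j :=
        fun i j => congrFun (congrFun (hsymm C.1 C.2) i) j
      ext i j
      fin_cases i <;> fin_cases j <;>
        simp only [Fin.zero_eta, Fin.mk_one, Fin.reduceFinMk, Fin.isValue] <;>
        first
          | assumption
          | (rw [hb0, hc0])
          | (rw [hb1, hc1])
          | (rw [hb2, hc2])
          | (rw [eB 0 1, eC 0 1]; assumption)
          | (rw [eB 0 2, eC 0 2]; assumption)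
          | (rw [eB 1 2, eC 1 2]; assumption)
    have hle : finrank F L ≤ 3 := by
      have := LinearMap.finrank_le_finrank_of_injective hpinj
      simpa [Module.finrank_fin_fun] using this
    omega
  · push_neg at halt
    obtain ⟨A, hA, x, hx⟩ := halt
    have hAsym := hsymm A hA
    have hAdet := hsing A hA
    obtain ⟨u, hu1⟩ := scale_one hx
    set b : Fin 3 → F := A *ᵥ u with hbdef
    have hub : u ⬝ᵥ b = 1 := hu1
    set A₁ : Matrix (Fin 3) (Fin 3) F := A - Matrix.vecMulVec b b with hA₁def
    have hA₁symm : A₁.IsSymm := by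
      show A₁ᵀ = A₁
      rw [hA₁def, Matrix.transpose_sub, vmv_transpose, hAsym.eq]
    have hA₁u : A₁ *ᵥ u = 0 := by
      rw [hA₁def, Matrix.sub_mulVec, vmv_mulVec, dotProduct_comm b u, hub, one_smul,
        ← hbdef, sub_self]
    have hAsum : A = Matrix.vecMulVec b b + A₁ := by rw [hA₁def]; abel
    by_cases hA₁0 : A₁ = 0
    · -- A = b bᵀ : rank one case
      have hAbb : A = Matrix.vecMulVec b b := by rw [hAsum, hA₁0, add_zero]
      have hbne : b ≠ 0 := by
        intro h0
        rw [h0] at hub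
        simp [dotProduct] at hub
      obtain ⟨S, hS, hSb⟩ := exists_S_single hbne
      obtain ⟨L', hfr, hsymm', hsing', hmem⟩ := transported L hsymm hsing S hS
      have hN : (!![1,0,0;0,0,0;0,0,0] : Matrix (Fin 3) (Fin 3) F) ∈ L' := by
        have := hmem A hA
        rwa [hAbb, mul_vmv_mul, hSb, vmv_e1] at this
      exact caseE11 L' hsymm' hsing' hN (by omega)
    · by_cases hA₁alt : ∀ z : Fin 3 → F, z ⬝ᵥ (A₁ *ᵥ z) = 0
      · -- A₁ alternating and nonzero : contradiction
        obtain ⟨v, w, hvw, hind⟩ := alt_decomp hA₁symm hA₁alt hA₁0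
        have hcombo : (w ⬝ᵥ u) • v + (v ⬝ᵥ u) • w = 0 := by
          calc (w ⬝ᵥ u) • v + (v ⬝ᵥ u) • w
              = A₁ *ᵥ u := by rw [hvw, Matrix.add_mulVec, vmv_mulVec, vmv_mulVec]
            _ = 0 := hA₁u
        obtain ⟨hwu, hvu⟩ := hind _ _ hcombo
        have hdetbvw : (Matrix.of ![b, v, w]).det = 0 := by
          have h1 : A.det = -((Matrix.of ![b, v, w]).det)^2 := by
            rw [show A = Matrix.vecMulVec b b + Matrix.vecMulVec v w + Matrix.vecMulVec w v from
              by rw [hAsum, hvw, add_assoc]]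
            exact det_bvw b v w
          rw [hAdet] at h1
          have h2 : ((Matrix.of ![b, v, w]).det)^2 = 0 := by linear_combination h1
          exact pow_eq_zero_iff (n := 2) (by norm_num) |>.mp h2
        obtain ⟨y, hy0, hy⟩ := (Matrix.exists_mulVec_eq_zero_iff).mpr
          (show ((Matrix.of ![b, v, w])ᵀ).det = 0 by rw [Matrix.det_transpose]; exact hdetbvw)
        have hcomb : ∀ i, y 0 * b i + y 1 * v i + y 2 * w i = 0 := by
          intro i
          have := congrFun hy i
          simp only [Matrix.mulVec, dotProduct, Fin.sum_univ_three,
            Matrix.transpose_apply, Matrix.of_apply, Matrix.cons_val_zero, Matrix.cons_val_one,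
            Matrix.head_cons, Matrix.cons_val_two, Matrix.tail_cons, Pi.zero_apply] at this
          linear_combination this
        have hub' : u 0 * b 0 + u 1 * b 1 + u 2 * b 2 = 1 := by
          simpa [dotProduct, Fin.sum_univ_three] using hub
        have hvu' : v 0 * u 0 + v 1 * u 1 + v 2 * u 2 = 0 := by
          simpa [dotProduct, Fin.sum_univ_three] using hvu
        have hwu' : w 0 * u 0 + w 1 * u 1 + w 2 * u 2 = 0 := by
          simpa [dotProduct, Fin.sum_univ_three] using hwu
        have hy00 : y 0 = 0 := by
          linear_combination u 0 * hcomb 0 + u 1 * hcomb 1 + u 2 * hcomb 2 - y 0 * hub'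
            - y 1 * hvu' - y 2 * hwu'
        have hvwcomb : (y 1) • v + (y 2) • w = 0 := by
          funext i
          have := hcomb i
          rw [hy00] at this
          simp only [Pi.add_apply, Pi.smul_apply, smul_eq_mul, Pi.zero_apply]
          linear_combination this
        obtain ⟨hy1, hy2⟩ := hind _ _ hvwcomb
        apply hy0
        funext i
        fin_cases i
        · exact hy00
        · exact hy1
        · exact hy2
      · push_neg at hA₁alt
        obtain ⟨y', hy'⟩ := hA₁alt
        obtain ⟨u₂, hu₂1⟩ := scale_one hy'
        set c : Fin 3 → F := A₁ *ᵥ u₂ with hcdef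
        have hu₂c : u₂ ⬝ᵥ c = 1 := hu₂1
        have huc : u ⬝ᵥ c = 0 := by
          rw [hcdef, dot_symm hA₁symm u u₂, hA₁u, zero_dotProduct]
        set A₂ : Matrix (Fin 3) (Fin 3) F := A₁ - Matrix.vecMulVec c c with hA₂def
        have hA₂symm : A₂.IsSymm := by
          show A₂ᵀ = A₂
          rw [hA₂def, Matrix.transpose_sub, vmv_transpose, hA₁symm.eq]
        have hA₂u : A₂ *ᵥ u = 0 := by
          rw [hA₂def, Matrix.sub_mulVec, vmv_mulVec, dotProduct_comm c u, huc, zero_smul,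
            hA₁u, sub_zero]
        have hA₂u₂ : A₂ *ᵥ u₂ = 0 := by
          rw [hA₂def, Matrix.sub_mulVec, vmv_mulVec, dotProduct_comm c u₂, hu₂c, one_smul,
            ← hcdef, sub_self]
        have hA₁sum : A₁ = Matrix.vecMulVec c c + A₂ := by rw [hA₂def]; abel
        by_cases hA₂0 : A₂ = 0
        · -- A = b bᵀ + c cᵀ : rank two case
          have hAcc : A = Matrix.vecMulVec b b + Matrix.vecMulVec c c := by
            rw [hAsum, hA₁sum, hA₂0, add_zero]
          have hbne : b ≠ 0 := by
            intro h0
            rw [h0] at hub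
            simp [dotProduct] at hub
          have hbcne : cp b c ≠ 0 := by
            intro h0
            obtain ⟨t, ht⟩ := cp_eq_zero_colinear hbne h0
            rw [ht] at huc
            rw [dotProduct_smul, hub, smul_eq_mul, mul_one] at huc
            rw [huc, zero_smul] at ht
            rw [ht] at hu₂c
            simp [dotProduct] at hu₂c
          obtain ⟨S, hS, hSb, hSc⟩ := exists_S_pair hbcne
          obtain ⟨L', hfr, hsymm', hsing', hmem⟩ := transported L hsymm hsing S hS
          have hN : (!![1,0,0;0,1,0;0,0,0] : Matrix (Fin 3) (Fin 3) F) ∈ L' := by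
            have := hmem A hA
            rwa [hAcc, Matrix.mul_add, Matrix.add_mul, mul_vmv_mul, mul_vmv_mul, hSb, hSc,
              vmv_e12] at this
          exact caseDiag L' hsymm' hsing' hN (by omega)
        · by_cases hA₂alt : ∀ z : Fin 3 → F, z ⬝ᵥ (A₂ *ᵥ z) = 0
          · -- A₂ alternating nonzero with two independent kernel vectors : contradiction
            obtain ⟨v, w, hvw, hind⟩ := alt_decomp hA₂symm hA₂alt hA₂0
            have hcombo1 : (w ⬝ᵥ u) • v + (v ⬝ᵥ u) • w = 0 := by
              calc (w ⬝ᵥ u) • v + (v ⬝ᵥ u) • w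
                  = A₂ *ᵥ u := by rw [hvw, Matrix.add_mulVec, vmv_mulVec, vmv_mulVec]
                _ = 0 := hA₂u
            have hcombo2 : (w ⬝ᵥ u₂) • v + (v ⬝ᵥ u₂) • w = 0 := by
              calc (w ⬝ᵥ u₂) • v + (v ⬝ᵥ u₂) • w
                  = A₂ *ᵥ u₂ := by rw [hvw, Matrix.add_mulVec, vmv_mulVec, vmv_mulVec]
                _ = 0 := hA₂u₂
            obtain ⟨hwu, hvu⟩ := hind _ _ hcombo1
            obtain ⟨hwu₂, hvu₂⟩ := hind _ _ hcombo2
            have hune : u ≠ 0 := by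
              intro h0
              rw [h0] at hub
              simp [dotProduct] at hub
            have hn : cp u u₂ ≠ 0 := by
              intro h0
              obtain ⟨t, ht⟩ := cp_eq_zero_colinear hune h0
              rw [ht, smul_dotProduct, huc, smul_eq_mul, mul_zero] at hu₂c
              exact zero_ne_one hu₂c
            have hv : cp (cp u u₂) v = 0 :=
              triple_prod u u₂ v (by rw [dotProduct_comm]; exact hvu)
                (by rw [dotProduct_comm]; exact hvu₂)
            have hw : cp (cp u u₂) w = 0 :=
              triple_prod u u₂ w (by rw [dotProduct_comm]; exact hwu)
                (by rw [dotProduct_comm]; exact hwu₂)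
            obtain ⟨tv, htv⟩ := cp_eq_zero_colinear hn hv
            obtain ⟨tw, htw⟩ := cp_eq_zero_colinear hn hw
            have hzz := hind tw (-tv) (by
              rw [htv, htw, smul_smul, smul_smul]
              funext i
              simp only [Pi.add_apply, Pi.smul_apply, smul_eq_mul, Pi.zero_apply]
              ring)
            have htv0 : tv = 0 := neg_eq_zero.mp hzz.2
            have hv0 : v = 0 := by rw [htv, htv0, zero_smul]
            have hw0 : w = 0 := by rw [htw, hzz.1, zero_smul]
            apply hA₂0
            rw [hvw, hv0, hw0]
            ext i j
            simp [Matrix.vecMulVec_apply]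
          · -- third peeling step : A would be nonsingular, contradiction
            push_neg at hA₂alt
            obtain ⟨z', hz'⟩ := hA₂alt
            obtain ⟨u₃, hu₃1⟩ := scale_one hz'
            set d : Fin 3 → F := A₂ *ᵥ u₃ with hddef
            have hu₃d : u₃ ⬝ᵥ d = 1 := hu₃1
            have hud : u ⬝ᵥ d = 0 := by
              rw [hddef, dot_symm hA₂symm u u₃, hA₂u, zero_dotProduct]
            have hu₂d : u₂ ⬝ᵥ d = 0 := by
              rw [hddef, dot_symm hA₂symm u₂ u₃, hA₂u₂, zero_dotProduct]
            set A₃ : Matrix (Fin 3) (Fin 3) F := A₂ - Matrix.vecMulVec d d with hA₃def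
            have hA₃symm : A₃.IsSymm := by
              show A₃ᵀ = A₃
              rw [hA₃def, Matrix.transpose_sub, vmv_transpose, hA₂symm.eq]
            have hA₃u : A₃ *ᵥ u = 0 := by
              rw [hA₃def, Matrix.sub_mulVec, vmv_mulVec, dotProduct_comm d u, hud,
                zero_smul, hA₂u, sub_zero]
            have hA₃u₂ : A₃ *ᵥ u₂ = 0 := by
              rw [hA₃def, Matrix.sub_mulVec, vmv_mulVec, dotProduct_comm d u₂, hu₂d,
                zero_smul, hA₂u₂, sub_zero]
            have hA₃u₃ : A₃ *ᵥ u₃ = 0 := by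
              rw [hA₃def, Matrix.sub_mulVec, vmv_mulVec, dotProduct_comm d u₃, hu₃d,
                one_smul, ← hddef, sub_self]
            set P : Matrix (Fin 3) (Fin 3) F := Matrix.of ![u, u₂, u₃] with hPdef
            set Bm : Matrix (Fin 3) (Fin 3) F := (Matrix.of ![b, c, d])ᵀ with hBmdef
            have hAfact : A = Bm * Bmᵀ + A₃ := by
              rw [hBmdef, Matrix.transpose_transpose, bm_mul_bmT]
              rw [hAsum, hA₁sum, hA₃def]
              abel
            have eA₃ : ∀ i j : Fin 3, A₃ j i = A₃ i j :=
              fun i j => congrFun (congrFun hA₃symm i) j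
            have hPA₃ : P * A₃ = 0 := by
              have hrow : ∀ (uu : Fin 3 → F), A₃ *ᵥ uu = 0 →
                  ∀ j : Fin 3, uu 0 * A₃ 0 j + uu 1 * A₃ 1 j + uu 2 * A₃ 2 j = 0 := by
                intro uu huu j
                have := congrFun huu j
                simp only [Matrix.mulVec, dotProduct, Fin.sum_univ_three,
                  Pi.zero_apply] at this
                linear_combination this - uu 0 * eA₃ 0 j - uu 1 * eA₃ 1 j - uu 2 * eA₃ 2 j
              ext i j
              rw [Matrix.mul_apply, Fin.sum_univ_three]
              fin_cases i <;>
                simp only [hPdef, Matrix.of_apply, Matrix.cons_val_zero, Matrix.cons_val_one,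
                  Matrix.head_cons, Matrix.cons_val_two, Matrix.tail_cons, Fin.zero_eta,
                  Fin.mk_one, Fin.reduceFinMk, Fin.isValue, Matrix.zero_apply]
              · exact hrow u hA₃u j
              · exact hrow u₂ hA₃u₂ j
              · exact hrow u₃ hA₃u₃ j
            set T : Matrix (Fin 3) (Fin 3) F := P * Bm with hTdef
            have hTentry : ∀ i j : Fin 3, T i j = ![u, u₂, u₃] i ⬝ᵥ ![b, c, d] j := by
              intro i j
              rw [hTdef, Matrix.mul_apply, Fin.sum_univ_three]
              simp only [hPdef, hBmdef, Matrix.transpose_apply, Matrix.of_apply,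
                dotProduct, Fin.sum_univ_three]
            have hdetT : T.det = 1 := by
              have t00 : T 0 0 = 1 := by rw [hTentry]; simpa using hub
              have t11 : T 1 1 = 1 := by rw [hTentry]; simpa using hu₂c
              have t22 : T 2 2 = 1 := by rw [hTentry]; simpa using hu₃d
              have t01 : T 0 1 = 0 := by rw [hTentry]; simpa using huc
              have t02 : T 0 2 = 0 := by rw [hTentry]; simpa using hud
              have t12 : T 1 2 = 0 := by rw [hTentry]; simpa using hu₂d
              rw [Matrix.det_fin_three, t00, t11, t22, t01, t02, t12]
              ring
            have hPAP : P * A * Pᵀ = T * Tᵀ := by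
              rw [hAfact, Matrix.mul_add, Matrix.add_mul, hPA₃, Matrix.zero_mul, add_zero,
                hTdef, Matrix.transpose_mul]
              simp only [Matrix.mul_assoc]
            have hcontr : (0 : F) = 1 := by
              have h1 : (P * A * Pᵀ).det = 0 := by
                rw [Matrix.det_mul, Matrix.det_mul, hAdet, mul_zero, zero_mul]
              have h2 : (P * A * Pᵀ).det = 1 := by
                rw [hPAP, Matrix.det_mul, Matrix.det_transpose, hdetT, mul_one]
              rw [← h1, h2]
            exact zero_ne_one hcontr
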